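/- Let m be a probability measure on ℝ^d, let X_1, …, X_N be independent identically distributed ℝ^d-valued random variables with law m on a probability space (Ω, F, P), and let Θ : ℝ^d × ℝ^d → ℝ^p be measurable such that E[‖Θ(X_1, X_2)‖²] ≤ C and E[‖Θ(X_1, X_1)‖²] ≤ C for some constant C ≥ 0. Define Θ̄(x) = ∫ Θ(x,z) dm(z). Then for every i ∈ {1, …, N}: E[ ‖ (1/N) Σ_{j=1}^N Θ(X_i, X_j) − Θ̄(X_i) ‖² ] ≤ 12 C / N. -/

import Mathlib

open MeasureTheory ProbabilityTheory
open scoped ENNReal RealInnerProductSpace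

lemma sq_integral_le_integral_sq {α : Type*} [MeasurableSpace α] {μ : Measure α}
    [IsProbabilityMeasure μ] {h : α → ℝ} (hh : MemLp h 2 μ) :
    (∫ x, h x ∂μ) ^ 2 ≤ ∫ x, (h x) ^ 2 ∂μ := by
  have h0 := variance_nonneg h μ
  rw [variance_eq_sub hh] at h0
  simp only [Pi.pow_apply] at h0
  linarith

lemma int_of_lint {α : Type*} [MeasurableSpace α] {μ : Measure α}
    {g : α → ℝ} (hg : AEStronglyMeasurable g μ) (hg0 : 0 ≤ᵐ[μ] g) {C : ℝ} (hC : 0 ≤ C)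
    (h : ∫⁻ x, ENNReal.ofReal (g x) ∂μ ≤ ENNReal.ofReal C) :
    Integrable g μ ∧ ∫ x, g x ∂μ ≤ C := by
  have hfin : HasFiniteIntegral g μ := by
    rw [hasFiniteIntegral_iff_ofReal hg0]
    exact lt_of_le_of_lt h ENNReal.ofReal_lt_top
  refine ⟨⟨hg, hfin⟩, ?_⟩
  rw [integral_eq_lintegral_of_nonneg_ae hg0 hg]
  calc (∫⁻ x, ENNReal.ofReal (g x) ∂μ).toReal ≤ (ENNReal.ofReal C).toReal :=
        ENNReal.toReal_mono ENNReal.ofReal_ne_top h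
    _ = C := ENNReal.toReal_ofReal hC

lemma integrable_integral_comp_of_map {α β : Type*} [MeasurableSpace α] [MeasurableSpace β]
    {μ : Measure α} {ν : Measure β} {T : α → β} (hT : Measurable T) (hmap : μ.map T = ν)
    {g : β → ℝ} (hg : AEStronglyMeasurable g ν) (hgi : Integrable g ν) :
    Integrable (fun x => g (T x)) μ ∧ ∫ x, g (T x) ∂μ = ∫ y, g y ∂ν := by
  have h1 : Integrable g (μ.map T) := hmap ▸ hgi
  have hg' : AEStronglyMeasurable g (μ.map T) := hmap ▸ hg
  refine ⟨(integrable_map_measure hg' hT.aemeasurable).1 h1, ?_⟩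
  rw [← hmap, integral_map hT.aemeasurable hg']

set_option maxHeartbeats 1000000 in
/-- Quantitative law-of-large-numbers estimate: if `X_1, …, X_N` are i.i.d. with law `m`,
and the second moments `E[‖Θ(X_i,X_j)‖²]` (both off-diagonal and diagonal) are bounded
by `C`, then for each `i`,
`E[‖(1/N) Σ_j Θ(X_i,X_j) − Θ̄(X_i)‖²] ≤ 12 C / N`, where `Θ̄(x) = ∫ Θ(x,z) dm(z)`. -/
theorem empirical_average_L2_estimate
    (d p : ℕ) {Ω : Type*} [MeasurableSpace Ω] (μ : Measure Ω) [IsProbabilityMeasure μ]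
    (m : Measure (EuclideanSpace ℝ (Fin d))) [IsProbabilityMeasure m]
    (N : ℕ) (hN : 2 ≤ N)
    (X : Fin N → Ω → EuclideanSpace ℝ (Fin d))
    (hX_meas : ∀ i, Measurable (X i))
    (hX_law : ∀ i, μ.map (X i) = m)
    (hX_indep : iIndepFun X μ)
    (Θ : EuclideanSpace ℝ (Fin d) × EuclideanSpace ℝ (Fin d) → EuclideanSpace ℝ (Fin p))
    (hΘ : Measurable Θ)
    (C : ℝ) (hC : 0 ≤ C)
    (h_cross : ∀ i j : Fin N, i ≠ j →
      ∫⁻ ω, ENNReal.ofReal (‖Θ (X i ω, X j ω)‖ ^ 2) ∂μ ≤ ENNReal.ofReal C)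
    (h_diag : ∀ i : Fin N,
      ∫⁻ ω, ENNReal.ofReal (‖Θ (X i ω, X i ω)‖ ^ 2) ∂μ ≤ ENNReal.ofReal C) :
    ∀ i : Fin N,
      ∫⁻ ω, ENNReal.ofReal
          (‖(N : ℝ)⁻¹ • (∑ j : Fin N, Θ (X i ω, X j ω)) - ∫ z, Θ (X i ω, z) ∂m‖ ^ 2) ∂μ
        ≤ ENNReal.ofReal (12 * C / N) := by
  classical
  intro i
  have hNR : (0:ℝ) < (N:ℝ) := by exact_mod_cast lt_of_lt_of_le (by norm_num) hN
  set Tb : (EuclideanSpace ℝ (Fin d)) → (EuclideanSpace ℝ (Fin p)) := fun a => ∫ z, Θ (a, z) ∂m with hTbdef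
  set f : (EuclideanSpace ℝ (Fin d)) × (EuclideanSpace ℝ (Fin d)) → (EuclideanSpace ℝ (Fin p)) := fun q => Θ q - Tb q.1 with hfdef
  have hTb_sm : StronglyMeasurable Tb := by
    rw [hTbdef]; exact hΘ.stronglyMeasurable.integral_prod_right'
  have hf_meas : Measurable f :=
    hΘ.sub (hTb_sm.measurable.comp measurable_fst)
  -- (A) centered fibers integrate to zero
  have keyA : ∀ a : (EuclideanSpace ℝ (Fin d)), ∫ z, f (a, z) ∂m = 0 := by
    intro a
    by_cases hint : Integrable (fun z => Θ (a, z)) m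
    · simp only [hfdef]
      rw [integral_sub hint (integrable_const _), integral_const, probReal_univ]
      simp [hTbdef]
    · have h2 : ¬ Integrable (fun z => f (a, z)) m := by
        intro h
        apply hint
        have he : (fun z => Θ (a, z)) = fun z => f (a, z) + Tb a := by
          funext z; simp [hfdef]
        rw [he]; exact h.add (integrable_const _)
      rw [integral_undef h2]
  have hXae : ∀ j, AEMeasurable (X j) μ := fun j => (hX_meas j).aemeasurable
  have hpair : ∀ j k : Fin N, j ≠ k → μ.map (fun ω => (X j ω, X k ω)) = m.prod m := by
    intro j k hjk
    have h := hX_indep.indepFun hjk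
    rw [indepFun_iff_map_prod_eq_prod_map_map (hXae j) (hXae k)] at h
    rw [h, hX_law j, hX_law k]
  -- second moment of Θ on m ⊗ m
  have hΘsq_meas : Measurable fun q : (EuclideanSpace ℝ (Fin d)) × (EuclideanSpace ℝ (Fin d)) => ‖Θ q‖ ^ 2 := (hΘ.norm.pow_const 2)
  have hΘ2 : Integrable (fun q : (EuclideanSpace ℝ (Fin d)) × (EuclideanSpace ℝ (Fin d)) => ‖Θ q‖ ^ 2) (m.prod m) ∧
      ∫ q, ‖Θ q‖ ^ 2 ∂(m.prod m) ≤ C := by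
    have : Nontrivial (Fin N) := Fin.nontrivial_iff_two_le.2 hN
    obtain ⟨j, hji⟩ : ∃ j : Fin N, j ≠ i := exists_ne i
    refine int_of_lint hΘsq_meas.aestronglyMeasurable
      (Filter.Eventually.of_forall fun q => by positivity) hC ?_
    rw [← hpair i j (Ne.symm hji),
      lintegral_map hΘsq_meas.ennreal_ofReal
        ((hX_meas i).prodMk (hX_meas j))]
    exact h_cross i j (Ne.symm hji)
  -- diagonal second moment on m
  have hD2 : Integrable (fun a : (EuclideanSpace ℝ (Fin d)) => ‖Θ (a, a)‖ ^ 2) m ∧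
      ∫ a, ‖Θ (a, a)‖ ^ 2 ∂m ≤ C := by
    have hdm : Measurable fun a : (EuclideanSpace ℝ (Fin d)) => ‖Θ (a, a)‖ ^ 2 :=
      hΘsq_meas.comp (measurable_id.prodMk measurable_id)
    refine int_of_lint hdm.aestronglyMeasurable
      (Filter.Eventually.of_forall fun a => by positivity) hC ?_
    rw [← hX_law i, lintegral_map hdm.ennreal_ofReal (hX_meas i)]
    exact h_diag i
  -- second moment of Tb
  have hTbsq_meas : Measurable fun a : (EuclideanSpace ℝ (Fin d)) => ‖Tb a‖ ^ 2 := hTb_sm.measurable.norm.pow_const 2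
  have hTb2 : Integrable (fun a : (EuclideanSpace ℝ (Fin d)) => ‖Tb a‖ ^ 2) m ∧ ∫ a, ‖Tb a‖ ^ 2 ∂m ≤ C := by
    have hG : Integrable (fun a : (EuclideanSpace ℝ (Fin d)) => ∫ z, ‖Θ (a, z)‖ ^ 2 ∂m) m := hΘ2.1.integral_prod_left
    have hgle : ∀ᵐ a ∂m, ‖Tb a‖ ^ 2 ≤ ∫ z, ‖Θ (a, z)‖ ^ 2 ∂m := by
      filter_upwards [hΘ2.1.prod_right_ae] with a ha
      have hmem : MemLp (fun z => ‖Θ (a, z)‖) 2 m := by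
        refine (memLp_two_iff_integrable_sq
          ((hΘ.comp measurable_prodMk_left).norm.aestronglyMeasurable)).2 ?_
        simpa using ha
      have h1 : ‖Tb a‖ ≤ ∫ z, ‖Θ (a, z)‖ ∂m := norm_integral_le_integral_norm _
      have h2 : (∫ z, ‖Θ (a, z)‖ ∂m) ^ 2 ≤ ∫ z, ‖Θ (a, z)‖ ^ 2 ∂m :=
        sq_integral_le_integral_sq hmem
      nlinarith [norm_nonneg (Tb a),
        integral_nonneg (f := fun z => ‖Θ (a, z)‖) (fun z => norm_nonneg (Θ (a, z))) (μ := m)]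
    have hTbsq_int : Integrable (fun a : (EuclideanSpace ℝ (Fin d)) => ‖Tb a‖ ^ 2) m := by
      refine hG.mono' hTbsq_meas.aestronglyMeasurable ?_
      filter_upwards [hgle] with a ha
      rw [Real.norm_of_nonneg (by positivity)]; exact ha
    refine ⟨hTbsq_int, ?_⟩
    refine (integral_mono_ae hTbsq_int hG hgle).trans ?_
    rw [← integral_prod _ hΘ2.1]
    exact hΘ2.2
  -- measure preserving projections
  have hfstMP : MeasurePreserving (Prod.fst : (EuclideanSpace ℝ (Fin d)) × (EuclideanSpace ℝ (Fin d)) → (EuclideanSpace ℝ (Fin d))) (m.prod m) m :=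
    ⟨measurable_fst, by simp⟩
  have hsndMP : MeasurePreserving (Prod.snd : (EuclideanSpace ℝ (Fin d)) × (EuclideanSpace ℝ (Fin d)) → (EuclideanSpace ℝ (Fin d))) (m.prod m) m :=
    ⟨measurable_snd, by simp⟩
  have hTbfst_int : Integrable (fun q : (EuclideanSpace ℝ (Fin d)) × (EuclideanSpace ℝ (Fin d)) => ‖Tb q.1‖ ^ 2) (m.prod m) := by
    have := (hfstMP.integrable_comp hTb2.1.aestronglyMeasurable).2 hTb2.1
    exact this
  have hTbfst_eq : ∫ q, ‖Tb q.1‖ ^ 2 ∂(m.prod m) = ∫ a, ‖Tb a‖ ^ 2 ∂m := by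
    have hg' : AEStronglyMeasurable (fun a => ‖Tb a‖ ^ 2) (Measure.map Prod.fst (m.prod m)) := by
      rw [hfstMP.map_eq]; exact hTb2.1.aestronglyMeasurable
    rw [← integral_map measurable_fst.aemeasurable hg', hfstMP.map_eq]
  -- second moment of f on m ⊗ m
  have hfsq_meas : Measurable fun q : (EuclideanSpace ℝ (Fin d)) × (EuclideanSpace ℝ (Fin d)) => ‖f q‖ ^ 2 := hf_meas.norm.pow_const 2
  have hfb : ∀ q : (EuclideanSpace ℝ (Fin d)) × (EuclideanSpace ℝ (Fin d)), ‖f q‖ ^ 2 ≤ 2 * ‖Θ q‖ ^ 2 + 2 * ‖Tb q.1‖ ^ 2 := by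
    intro q
    have h := norm_sub_le (Θ q) (Tb q.1)
    have h2 : ‖f q‖ ≤ ‖Θ q‖ + ‖Tb q.1‖ := h
    have h3 : ‖f q‖ ^ 2 ≤ (‖Θ q‖ + ‖Tb q.1‖) ^ 2 := by
      apply pow_le_pow_left₀ (norm_nonneg _) h2
    nlinarith [sq_nonneg (‖Θ q‖ - ‖Tb q.1‖)]
  have hf2 : Integrable (fun q : (EuclideanSpace ℝ (Fin d)) × (EuclideanSpace ℝ (Fin d)) => ‖f q‖ ^ 2) (m.prod m) ∧
      ∫ q, ‖f q‖ ^ 2 ∂(m.prod m) ≤ 4 * C := by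
    have hdom : Integrable (fun q : (EuclideanSpace ℝ (Fin d)) × (EuclideanSpace ℝ (Fin d)) => 2 * ‖Θ q‖ ^ 2 + 2 * ‖Tb q.1‖ ^ 2) (m.prod m) :=
      (hΘ2.1.const_mul 2).add (hTbfst_int.const_mul 2)
    have hint : Integrable (fun q : (EuclideanSpace ℝ (Fin d)) × (EuclideanSpace ℝ (Fin d)) => ‖f q‖ ^ 2) (m.prod m) := by
      refine hdom.mono' hfsq_meas.aestronglyMeasurable ?_
      exact Filter.Eventually.of_forall fun q => by
        rw [Real.norm_of_nonneg (by positivity)]; exact hfb q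
    refine ⟨hint, ?_⟩
    calc ∫ q, ‖f q‖ ^ 2 ∂(m.prod m)
        ≤ ∫ q, (2 * ‖Θ q‖ ^ 2 + 2 * ‖Tb q.1‖ ^ 2) ∂(m.prod m) :=
          integral_mono hint hdom hfb
      _ = 2 * (∫ q, ‖Θ q‖ ^ 2 ∂(m.prod m)) + 2 * (∫ q, ‖Tb q.1‖ ^ 2 ∂(m.prod m)) := by
          rw [integral_add (hΘ2.1.const_mul 2) (hTbfst_int.const_mul 2),
            integral_const_mul, integral_const_mul]
      _ ≤ 4 * C := by rw [hTbfst_eq]; nlinarith [hΘ2.2, hTb2.2]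
  -- diagonal second moment of f on m
  have hfd : Integrable (fun a : (EuclideanSpace ℝ (Fin d)) => ‖f (a, a)‖ ^ 2) m ∧
      ∫ a, ‖f (a, a)‖ ^ 2 ∂m ≤ 4 * C := by
    have hdm : Measurable fun a : (EuclideanSpace ℝ (Fin d)) => ‖f (a, a)‖ ^ 2 :=
      hfsq_meas.comp (measurable_id.prodMk measurable_id)
    have hdom : Integrable (fun a : (EuclideanSpace ℝ (Fin d)) => 2 * ‖Θ (a, a)‖ ^ 2 + 2 * ‖Tb a‖ ^ 2) m :=
      (hD2.1.const_mul 2).add (hTb2.1.const_mul 2)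
    have hint : Integrable (fun a : (EuclideanSpace ℝ (Fin d)) => ‖f (a, a)‖ ^ 2) m := by
      refine hdom.mono' hdm.aestronglyMeasurable ?_
      exact Filter.Eventually.of_forall fun a => by
        rw [Real.norm_of_nonneg (by positivity)]; exact hfb (a, a)
    refine ⟨hint, ?_⟩
    calc ∫ a, ‖f (a, a)‖ ^ 2 ∂m
        ≤ ∫ a, (2 * ‖Θ (a, a)‖ ^ 2 + 2 * ‖Tb a‖ ^ 2) ∂m :=
          integral_mono hint hdom fun a => hfb (a, a)
      _ = 2 * (∫ a, ‖Θ (a, a)‖ ^ 2 ∂m) + 2 * (∫ a, ‖Tb a‖ ^ 2 ∂m) := by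
          rw [integral_add (hD2.1.const_mul 2) (hTb2.1.const_mul 2),
            integral_const_mul, integral_const_mul]
      _ ≤ 4 * C := by nlinarith [hD2.2, hTb2.2]
  -- the centered random variables
  set Y : Fin N → Ω → (EuclideanSpace ℝ (Fin p)) := fun j ω => f (X i ω, X j ω) with hYdef
  have hY_meas : ∀ j, Measurable (Y j) :=
    fun j => hf_meas.comp ((hX_meas i).prodMk (hX_meas j))
  have hYsq : ∀ j, Integrable (fun ω => ‖Y j ω‖ ^ 2) μ ∧ ∫ ω, ‖Y j ω‖ ^ 2 ∂μ ≤ 4 * C := by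
    intro j
    by_cases hji : j = i
    · subst hji
      have hdiag_meas : Measurable (fun a : (EuclideanSpace ℝ (Fin d)) => (a, a)) :=
        measurable_id.prodMk measurable_id
      have hmapd : μ.map (fun ω => (X j ω, X j ω)) = m.map (fun a : (EuclideanSpace ℝ (Fin d)) => (a, a)) := by
        have : (fun ω => (X j ω, X j ω)) = (fun a : (EuclideanSpace ℝ (Fin d)) => (a, a)) ∘ X j := rfl
        rw [this, ← Measure.map_map hdiag_meas (hX_meas j), hX_law j]
      have hdiagMP : MeasurePreserving (fun a : (EuclideanSpace ℝ (Fin d)) => (a, a)) m (m.map (fun a : (EuclideanSpace ℝ (Fin d)) => (a, a))) :=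
        ⟨measurable_id.prodMk measurable_id, rfl⟩
      have hgm : AEStronglyMeasurable (fun q : (EuclideanSpace ℝ (Fin d)) × (EuclideanSpace ℝ (Fin d)) => ‖f q‖ ^ 2)
          (m.map (fun a : (EuclideanSpace ℝ (Fin d)) => (a, a))) := hfsq_meas.aestronglyMeasurable
      have hgi : Integrable (fun q : (EuclideanSpace ℝ (Fin d)) × (EuclideanSpace ℝ (Fin d)) => ‖f q‖ ^ 2) (m.map (fun a : (EuclideanSpace ℝ (Fin d)) => (a, a))) := by
        refine (integrable_map_measure hgm hdiag_meas.aemeasurable).2 ?_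
        exact hfd.1
      obtain ⟨h1, h2⟩ := integrable_integral_comp_of_map
        ((hX_meas j).prodMk (hX_meas j)) hmapd hgm hgi
      refine ⟨h1, ?_⟩
      rw [h2, integral_map hdiag_meas.aemeasurable hgm]
      simpa using hfd.2
    · obtain ⟨h1, h2⟩ := integrable_integral_comp_of_map
        ((hX_meas i).prodMk (hX_meas j)) (hpair i j (Ne.symm hji))
        hfsq_meas.aestronglyMeasurable hf2.1
      exact ⟨h1, h2 ▸ hf2.2⟩
  have hInner_meas : ∀ j k, Measurable (fun ω => ⟪Y j ω, Y k ω⟫) :=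
    fun j k => (hY_meas j).inner (hY_meas k)
  have hInner_int : ∀ j k, Integrable (fun ω => ⟪Y j ω, Y k ω⟫) μ := by
    intro j k
    refine ((hYsq j).1.add (hYsq k).1).mono' (hInner_meas j k).aestronglyMeasurable ?_
    refine Filter.Eventually.of_forall fun ω => ?_
    have h := abs_real_inner_le_norm (Y j ω) (Y k ω)
    simp only [Real.norm_eq_abs, Pi.add_apply]
    nlinarith [abs_nonneg ⟪Y j ω, Y k ω⟫, norm_nonneg (Y j ω), norm_nonneg (Y k ω),
      sq_nonneg (‖Y j ω‖ - ‖Y k ω‖)]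
  -- decorrelation of distinct off-diagonal terms
  have hzero : ∀ j k : Fin N, j ≠ i → k ≠ i → j ≠ k →
      ∫ ω, ⟪Y j ω, Y k ω⟫ ∂μ = 0 := by
    intro j k hji hki hjk
    have hIndep : IndepFun (X i) (fun ω => (X j ω, X k ω)) μ :=
      (hX_indep.indepFun_prodMk hX_meas j k i hji hki).symm
    have hmap3 : μ.map (fun ω => (X i ω, (X j ω, X k ω))) = m.prod (m.prod m) := by
      rw [(indepFun_iff_map_prod_eq_prod_map_map (hXae i)
        ((hX_meas j).prodMk (hX_meas k)).aemeasurable).1 hIndep, hX_law i, hpair j k hjk]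
    set g3 : (EuclideanSpace ℝ (Fin d)) × ((EuclideanSpace ℝ (Fin d)) × (EuclideanSpace ℝ (Fin d))) → ℝ := fun t => ⟪f (t.1, t.2.1), f (t.1, t.2.2)⟫ with hg3def
    have hg3_meas : Measurable g3 :=
      (hf_meas.comp (measurable_fst.prodMk (measurable_fst.comp measurable_snd))).inner
        (hf_meas.comp (measurable_fst.prodMk (measurable_snd.comp measurable_snd)))
    have hmp1 : MeasurePreserving (fun t : (EuclideanSpace ℝ (Fin d)) × ((EuclideanSpace ℝ (Fin d)) × (EuclideanSpace ℝ (Fin d))) => (t.1, t.2.1))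
        (m.prod (m.prod m)) (m.prod m) :=
      (MeasurePreserving.id m).prod hfstMP
    have hmp2 : MeasurePreserving (fun t : (EuclideanSpace ℝ (Fin d)) × ((EuclideanSpace ℝ (Fin d)) × (EuclideanSpace ℝ (Fin d))) => (t.1, t.2.2))
        (m.prod (m.prod m)) (m.prod m) :=
      (MeasurePreserving.id m).prod hsndMP
    have hsq1 : Integrable (fun t : (EuclideanSpace ℝ (Fin d)) × ((EuclideanSpace ℝ (Fin d)) × (EuclideanSpace ℝ (Fin d))) => ‖f (t.1, t.2.1)‖ ^ 2) (m.prod (m.prod m)) := by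
      have := (hmp1.integrable_comp hfsq_meas.aestronglyMeasurable).2 hf2.1
      exact this
    have hsq2 : Integrable (fun t : (EuclideanSpace ℝ (Fin d)) × ((EuclideanSpace ℝ (Fin d)) × (EuclideanSpace ℝ (Fin d))) => ‖f (t.1, t.2.2)‖ ^ 2) (m.prod (m.prod m)) := by
      have := (hmp2.integrable_comp hfsq_meas.aestronglyMeasurable).2 hf2.1
      exact this
    have hg3_int : Integrable g3 (m.prod (m.prod m)) := by
      refine (hsq1.add hsq2).mono' hg3_meas.aestronglyMeasurable ?_
      refine Filter.Eventually.of_forall fun t => ?_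
      have h := abs_real_inner_le_norm (f (t.1, t.2.1)) (f (t.1, t.2.2))
      simp only [Real.norm_eq_abs, Pi.add_apply]
      nlinarith [abs_nonneg ⟪f (t.1, t.2.1), f (t.1, t.2.2)⟫,
        sq_nonneg (‖f (t.1, t.2.1)‖ - ‖f (t.1, t.2.2)‖)]
    obtain ⟨h1, h2⟩ := integrable_integral_comp_of_map
      ((hX_meas i).prodMk ((hX_meas j).prodMk (hX_meas k))) hmap3
      hg3_meas.aestronglyMeasurable hg3_int
    have hYg : (fun ω => ⟪Y j ω, Y k ω⟫) = fun ω => g3 (X i ω, (X j ω, X k ω)) := rfl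
    rw [hYg, h2]
    -- now show the triple integral vanishes
    rw [integral_prod _ hg3_int]
    have hae : ∀ᵐ a ∂m, (∫ q, g3 (a, q) ∂(m.prod m)) = 0 := by
      filter_upwards [hf2.1.prod_right_ae] with a ha
      -- ha : Integrable (fun b => ‖f (a, b)‖ ^ 2) m
      have hfa_meas : Measurable fun b : (EuclideanSpace ℝ (Fin d)) => f (a, b) := hf_meas.comp measurable_prodMk_left
      have hfa_mem : MemLp (fun b : (EuclideanSpace ℝ (Fin d)) => f (a, b)) 2 m := by
        refine (memLp_two_iff_integrable_sq_norm hfa_meas.aestronglyMeasurable).2 ?_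
        simpa using ha
      have hfa_int : Integrable (fun b : (EuclideanSpace ℝ (Fin d)) => f (a, b)) m :=
        hfa_mem.integrable (by norm_num)
      have hb1 : Integrable (fun q : (EuclideanSpace ℝ (Fin d)) × (EuclideanSpace ℝ (Fin d)) => ‖f (a, q.1)‖ ^ 2) (m.prod m) := by
        have := (hfstMP.integrable_comp
          ((hfa_meas.norm.pow_const 2).aestronglyMeasurable)).2 (by simpa using ha)
        exact this
      have hb2 : Integrable (fun q : (EuclideanSpace ℝ (Fin d)) × (EuclideanSpace ℝ (Fin d)) => ‖f (a, q.2)‖ ^ 2) (m.prod m) := by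
        have := (hsndMP.integrable_comp
          ((hfa_meas.norm.pow_const 2).aestronglyMeasurable)).2 (by simpa using ha)
        exact this
      have hGmeas : Measurable fun q : (EuclideanSpace ℝ (Fin d)) × (EuclideanSpace ℝ (Fin d)) => ⟪f (a, q.1), f (a, q.2)⟫ :=
        (hfa_meas.comp measurable_fst).inner (hfa_meas.comp measurable_snd)
      have hGint : Integrable (fun q : (EuclideanSpace ℝ (Fin d)) × (EuclideanSpace ℝ (Fin d)) => ⟪f (a, q.1), f (a, q.2)⟫) (m.prod m) := by
        refine (hb1.add hb2).mono' hGmeas.aestronglyMeasurable ?_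
        refine Filter.Eventually.of_forall fun q => ?_
        have h := abs_real_inner_le_norm (f (a, q.1)) (f (a, q.2))
        simp only [Real.norm_eq_abs, Pi.add_apply]
        nlinarith [abs_nonneg ⟪f (a, q.1), f (a, q.2)⟫,
          sq_nonneg (‖f (a, q.1)‖ - ‖f (a, q.2)‖)]
      have : (∫ q, g3 (a, q) ∂(m.prod m))
          = ∫ b, ∫ c, ⟪f (a, b), f (a, c)⟫ ∂m ∂m := integral_prod _ hGint
      rw [this]
      have hz : ∀ b : (EuclideanSpace ℝ (Fin d)), ∫ c, ⟪f (a, b), f (a, c)⟫ ∂m = 0 := by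
        intro b
        rw [integral_inner hfa_int, keyA a, inner_zero_right]
      have hz' : (fun b => ∫ c, ⟪f (a, b), f (a, c)⟫ ∂m) = fun _ => (0:ℝ) := funext hz
      rw [hz', integral_const, smul_zero]
    calc ∫ a, ∫ q, g3 (a, q) ∂(m.prod m) ∂m = ∫ a, (0:ℝ) ∂m := integral_congr_ae hae
      _ = 0 := integral_zero _ _
  -- pointwise identities
  have hpoint : ∀ ω, (N : ℝ)⁻¹ • (∑ j : Fin N, Θ (X i ω, X j ω)) - Tb (X i ω)
      = (N : ℝ)⁻¹ • ∑ j : Fin N, Y j ω := by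
    intro ω
    have hsum : ∑ j : Fin N, Y j ω
        = (∑ j : Fin N, Θ (X i ω, X j ω)) - (N : ℝ) • Tb (X i ω) := by
      rw [hYdef]
      simp only [hfdef]
      rw [Finset.sum_sub_distrib, Finset.sum_const, Finset.card_univ, Fintype.card_fin,
        ← Nat.cast_smul_eq_nsmul ℝ]
    rw [hsum, smul_sub, smul_smul, inv_mul_cancel₀ (ne_of_gt hNR), one_smul]
  have hexp : ∀ (s : Finset (Fin N)) ω,
      ‖∑ j ∈ s, Y j ω‖ ^ 2 = ∑ j ∈ s, ∑ k ∈ s, ⟪Y j ω, Y k ω⟫ := by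
    intro s ω
    rw [← real_inner_self_eq_norm_sq, sum_inner]
    exact Finset.sum_congr rfl fun j _ => inner_sum _ _ _
  have hg_int : ∀ s : Finset (Fin N), Integrable (fun ω => ‖∑ j ∈ s, Y j ω‖ ^ 2) μ := by
    intro s
    have he : (fun ω => ‖∑ j ∈ s, Y j ω‖ ^ 2)
        = fun ω => ∑ j ∈ s, ∑ k ∈ s, ⟪Y j ω, Y k ω⟫ := funext (hexp s)
    rw [he]
    exact integrable_finset_sum _ fun j _ => integrable_finset_sum _ fun k _ => hInner_int j k
  have hg_integral : ∀ s : Finset (Fin N), ∫ ω, ‖∑ j ∈ s, Y j ω‖ ^ 2 ∂μ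
      = ∑ j ∈ s, ∑ k ∈ s, ∫ ω, ⟪Y j ω, Y k ω⟫ ∂μ := by
    intro s
    have he : (fun ω => ‖∑ j ∈ s, Y j ω‖ ^ 2)
        = fun ω => ∑ j ∈ s, ∑ k ∈ s, ⟪Y j ω, Y k ω⟫ := funext (hexp s)
    rw [he, integral_finset_sum _ fun j _ => integrable_finset_sum _ fun k _ => hInner_int j k]
    exact Finset.sum_congr rfl fun j _ =>
      integral_finset_sum _ fun k _ => hInner_int j k
  have hdiag_integral : ∀ j, ∫ ω, ⟪Y j ω, Y j ω⟫ ∂μ ≤ 4 * C := by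
    intro j
    have : (fun ω => ⟪Y j ω, Y j ω⟫) = fun ω => ‖Y j ω‖ ^ 2 := by
      funext ω; exact real_inner_self_eq_norm_sq _
    rw [this]; exact (hYsq j).2
  set s : Finset (Fin N) := Finset.univ.erase i with hsdef
  have hcard : (s.card : ℝ) = (N : ℝ) - 1 := by
    rw [hsdef, Finset.card_erase_of_mem (Finset.mem_univ i), Finset.card_univ,
      Fintype.card_fin]
    have : 1 ≤ N := le_trans (by norm_num) hN
    push_cast [Nat.cast_sub this]
    ring
  have hS'_bound : ∫ ω, ‖∑ j ∈ s, Y j ω‖ ^ 2 ∂μ ≤ 4 * C * ((N : ℝ) - 1) := by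
    rw [hg_integral s]
    have hrow : ∀ j ∈ s, ∑ k ∈ s, ∫ ω, ⟪Y j ω, Y k ω⟫ ∂μ ≤ 4 * C := by
      intro j hj
      have hji : j ≠ i := Finset.ne_of_mem_erase hj
      have : ∑ k ∈ s, ∫ ω, ⟪Y j ω, Y k ω⟫ ∂μ = ∫ ω, ⟪Y j ω, Y j ω⟫ ∂μ := by
        refine Finset.sum_eq_single_of_mem j hj fun k hk hkj => ?_
        exact hzero j k hji (Finset.ne_of_mem_erase hk) (Ne.symm hkj)
      rw [this]; exact hdiag_integral j
    calc ∑ j ∈ s, ∑ k ∈ s, ∫ ω, ⟪Y j ω, Y k ω⟫ ∂μ ≤ ∑ j ∈ s, (4 * C) :=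
          Finset.sum_le_sum hrow
      _ = (s.card : ℝ) * (4 * C) := by rw [Finset.sum_const, nsmul_eq_mul]
      _ = 4 * C * ((N : ℝ) - 1) := by rw [hcard]; ring
  -- main real bound
  have hmain : ∫ ω, ‖∑ j : Fin N, Y j ω‖ ^ 2 ∂μ ≤ 12 * C * (N : ℝ) := by
    have hsplit : ∀ ω, ∑ j : Fin N, Y j ω = Y i ω + ∑ j ∈ s, Y j ω := by
      intro ω
      rw [hsdef]
      exact (Finset.add_sum_erase _ _ (Finset.mem_univ i)).symm
    have hptwise : ∀ ω, ‖∑ j : Fin N, Y j ω‖ ^ 2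
        ≤ 2 * ‖Y i ω‖ ^ 2 + 2 * ‖∑ j ∈ s, Y j ω‖ ^ 2 := by
      intro ω
      rw [hsplit ω]
      have h := norm_add_le (Y i ω) (∑ j ∈ s, Y j ω)
      have h3 : ‖Y i ω + ∑ j ∈ s, Y j ω‖ ^ 2 ≤ (‖Y i ω‖ + ‖∑ j ∈ s, Y j ω‖) ^ 2 := by
        apply pow_le_pow_left₀ (norm_nonneg _) h
      nlinarith [sq_nonneg (‖Y i ω‖ - ‖∑ j ∈ s, Y j ω‖)]
    have hdom : Integrable (fun ω => 2 * ‖Y i ω‖ ^ 2 + 2 * ‖∑ j ∈ s, Y j ω‖ ^ 2) μ :=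
      ((hYsq i).1.const_mul 2).add ((hg_int s).const_mul 2)
    calc ∫ ω, ‖∑ j : Fin N, Y j ω‖ ^ 2 ∂μ
        ≤ ∫ ω, (2 * ‖Y i ω‖ ^ 2 + 2 * ‖∑ j ∈ s, Y j ω‖ ^ 2) ∂μ :=
          integral_mono (hg_int Finset.univ) hdom hptwise
      _ = 2 * (∫ ω, ‖Y i ω‖ ^ 2 ∂μ) + 2 * (∫ ω, ‖∑ j ∈ s, Y j ω‖ ^ 2 ∂μ) := by
          rw [integral_add ((hYsq i).1.const_mul 2) ((hg_int s).const_mul 2),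
            integral_const_mul, integral_const_mul]
      _ ≤ 2 * (4 * C) + 2 * (4 * C * ((N : ℝ) - 1)) := by
          have := (hYsq i).2
          have := hS'_bound
          nlinarith [hC]
      _ ≤ 12 * C * (N : ℝ) := by nlinarith [hC, hNR]
  -- final conversion
  have hId : ∀ ω, (‖(N : ℝ)⁻¹ • (∑ j : Fin N, Θ (X i ω, X j ω)) - ∫ z, Θ (X i ω, z) ∂m‖ ^ 2)
      = ((N : ℝ)⁻¹) ^ 2 * ‖∑ j : Fin N, Y j ω‖ ^ 2 := by
    intro ω
    have : (∫ z, Θ (X i ω, z) ∂m) = Tb (X i ω) := rfl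
    rw [this, hpoint ω, norm_smul, mul_pow, Real.norm_eq_abs, sq_abs]
  have hfinal_int : Integrable (fun ω => ((N : ℝ)⁻¹) ^ 2 * ‖∑ j : Fin N, Y j ω‖ ^ 2) μ :=
    (hg_int Finset.univ).const_mul _
  calc ∫⁻ ω, ENNReal.ofReal
        (‖(N : ℝ)⁻¹ • (∑ j : Fin N, Θ (X i ω, X j ω)) - ∫ z, Θ (X i ω, z) ∂m‖ ^ 2) ∂μ
      = ∫⁻ ω, ENNReal.ofReal (((N : ℝ)⁻¹) ^ 2 * ‖∑ j : Fin N, Y j ω‖ ^ 2) ∂μ := by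
        exact lintegral_congr fun ω => by rw [hId ω]
    _ = ENNReal.ofReal (∫ ω, ((N : ℝ)⁻¹) ^ 2 * ‖∑ j : Fin N, Y j ω‖ ^ 2 ∂μ) := by
        rw [← ofReal_integral_eq_lintegral_ofReal hfinal_int
          (Filter.Eventually.of_forall fun ω => by positivity)]
    _ ≤ ENNReal.ofReal (12 * C / N) := by
        apply ENNReal.ofReal_le_ofReal
        rw [integral_const_mul]
        have h1 : ((N : ℝ)⁻¹) ^ 2 * ∫ ω, ‖∑ j : Fin N, Y j ω‖ ^ 2 ∂μ
            ≤ ((N : ℝ)⁻¹) ^ 2 * (12 * C * (N : ℝ)) := by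
          apply mul_le_mul_of_nonneg_left hmain (by positivity)
        refine h1.trans ?_
        rw [div_eq_mul_inv]
        have : ((N : ℝ)⁻¹) ^ 2 * (12 * C * (N : ℝ)) = 12 * C * (N : ℝ)⁻¹ := by
          field_simp
        rw [this]
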